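/- arXiv:2102.07451 — 2 statements merged into one kernel-verified Lean document; each statement's English description precedes it below -/
import Mathlib

section
/- Let $f : \mathbb{T} \to \mathbb{R}$ be Hölder continuous with exponent $\delta \in (0,1]$ and seminorm $|f|_{C^\delta}$, and write $f = f_+ - f_-$ with $f_\pm := \max(\pm f, 0)$. Let $\phi_r$ be a mollifier supported in $(-r,r)$ with $\phi_r \geq 0$ and $\int \phi_r = 1$, where $r = s(\eta/|f|_{C^\delta})^{1/\delta}$ for parameters $0 < \eta, s < 1$. Let $\chi : \mathbb{T} \to \{0,1\}$ be any indicator function supported where $f < \eta$, let $\psi_1 := \phi_r * \chi$, and define $c := \frac{1}{2}\phi_r * (\eta \chi + f_-)$. Then at every point $\alpha$ with $f(\alpha) < \eta$ (in particular on the support of $c$), one has $|2c(\alpha) + f(\alpha)| \leq \eta(2 + s^\delta)$. -/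
open Real MeasureTheory

/-- the growth-rate `c = ½ φ_r * (η χ + f₋)` built from a mollifier `φ_r`
supported in `(-r,r)` with `r = s (η/|f|_{C^δ})^{1/δ}` and an indicator `χ` supported
where `f < η` satisfies `|2c + f| ≤ η (2 + s^δ)` wherever `f < η`. -/
theorem growth_rate_admissible
    (f : ℝ → ℝ) (hf : Continuous f)
    (δ L : ℝ) (hδ0 : 0 < δ) (hδ1 : δ ≤ 1) (hL : 0 < L)
    (hHolder : ∀ a b : ℝ, |f a - f b| ≤ L * |a - b| ^ δ)
    (η s : ℝ) (hη : 0 < η) (hη1 : η < 1) (hs : 0 < s) (hs1 : s < 1)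
    (r : ℝ) (hr : r = s * (η / L) ^ (1 / δ))
    (φ : ℝ → ℝ) (hφmeas : MeasureTheory.Integrable φ)
    (hφsupp : Function.support φ ⊆ Set.Ioo (-r) r)
    (hφpos : ∀ x, 0 ≤ φ x) (hφint : ∫ x, φ x = 1)
    (χ : ℝ → ℝ) (hχmeas : Measurable χ)
    (hχ01 : ∀ x, χ x = 0 ∨ χ x = 1)
    (hχsupp : ∀ x, χ x ≠ 0 → f x < η)
    (c : ℝ → ℝ)
    (hc : ∀ α, c α = (1 / 2) * ∫ β, φ β * (η * χ (α - β) + max (-(f (α - β))) 0)) :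
    ∀ α, f α < η → |2 * c α + f α| ≤ η * (2 + s ^ δ) := by
  intro α hfα
  have hδne : δ ≠ 0 := ne_of_gt hδ0
  have hηL : (0:ℝ) < η / L := div_pos hη hL
  have hsδ : (0:ℝ) ≤ s ^ δ := Real.rpow_nonneg hs.le δ
  have hrpos : 0 < r := by
    rw [hr]; positivity
  have hrδ : L * r ^ δ = η * s ^ δ := by
    rw [hr, Real.mul_rpow hs.le (Real.rpow_nonneg hηL.le _), ← Real.rpow_mul hηL.le,
      one_div, inv_mul_cancel₀ hδne, Real.rpow_one]
    field_simp
  have hχ_le : ∀ x, 0 ≤ χ x ∧ χ x ≤ 1 := fun x => by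
    rcases hχ01 x with h | h <;> simp [h]
  have hg1_nonneg : ∀ β, 0 ≤ φ β * (η * χ (α - β)) := fun β =>
    mul_nonneg (hφpos β) (mul_nonneg hη.le (hχ_le _).1)
  have hg1_bd : ∀ β, φ β * (η * χ (α - β)) ≤ η * φ β := by
    intro β
    have h1 := (hχ_le (α - β)).2
    have h0 := hφpos β
    nlinarith [mul_le_mul_of_nonneg_left h1 h0]
  have hg2_bd : ∀ β, |φ β * (max (-(f (α - β))) 0 - max (-(f α)) 0)| ≤ φ β * (η * s ^ δ) := by
    intro β
    by_cases hβ : φ β = 0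
    · simp [hβ]
    · have hmem : β ∈ Set.Ioo (-r) r := hφsupp hβ
      have hβr : |β| ≤ r := by
        rw [abs_le]; exact ⟨hmem.1.le, hmem.2.le⟩
      have h1 : |f (α - β) - f α| ≤ η * s ^ δ := by
        have h2 := hHolder (α - β) α
        rw [show α - β - α = -β by ring, abs_neg] at h2
        calc |f (α - β) - f α| ≤ L * |β| ^ δ := h2
          _ ≤ L * r ^ δ :=
            mul_le_mul_of_nonneg_left
              (Real.rpow_le_rpow (abs_nonneg β) hβr hδ0.le) hL.le
          _ = η * s ^ δ := hrδ
      have h3 : |max (-(f (α - β))) 0 - max (-(f α)) 0| ≤ η * s ^ δ := by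
        calc |max (-(f (α - β))) 0 - max (-(f α)) 0|
            ≤ |(-(f (α - β))) - (-(f α))| := abs_max_sub_max_le_abs _ _ _
          _ = |f (α - β) - f α| := by
              rw [show -(f (α - β)) - -(f α) = -(f (α - β) - f α) by ring, abs_neg]
          _ ≤ η * s ^ δ := h1
      rw [abs_mul, abs_of_nonneg (hφpos β)]
      exact mul_le_mul_of_nonneg_left h3 (hφpos β)
  have hφaem := hφmeas.aestronglyMeasurable
  have hχm : Measurable fun β => χ (α - β) := hχmeas.comp (measurable_const.sub measurable_id)
  have hFmcont : Continuous fun x => max (-(f x)) 0 := (hf.neg).max continuous_const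
  have hfm : Measurable fun β => max (-(f (α - β))) 0 :=
    hFmcont.measurable.comp (measurable_const.sub measurable_id)
  have hint1 : Integrable (fun β => φ β * (η * χ (α - β))) := by
    refine (hφmeas.const_mul η).mono'
      (hφaem.mul ((hχm.const_mul η).aestronglyMeasurable)) ?_
    filter_upwards with β
    rw [Real.norm_eq_abs, abs_of_nonneg (hg1_nonneg β)]
    exact hg1_bd β
  have hint2 : Integrable (fun β => φ β * (max (-(f (α - β))) 0 - max (-(f α)) 0)) := by
    refine (hφmeas.mul_const (η * s ^ δ)).mono'
      (hφaem.mul ((hfm.sub measurable_const).aestronglyMeasurable)) ?_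
    filter_upwards with β
    rw [Real.norm_eq_abs]
    exact hg2_bd β
  have hint3 : Integrable (fun β => φ β * max (-(f α)) 0) := hφmeas.mul_const _
  have hsplit : (∫ β, φ β * (η * χ (α - β) + max (-(f (α - β))) 0))
      = (∫ β, φ β * (η * χ (α - β)))
        + (∫ β, φ β * (max (-(f (α - β))) 0 - max (-(f α)) 0))
        + (∫ β, φ β * max (-(f α)) 0) := by
    have heq : (fun β => φ β * (η * χ (α - β) + max (-(f (α - β))) 0))
        = fun β => (φ β * (η * χ (α - β))
            + φ β * (max (-(f (α - β))) 0 - max (-(f α)) 0))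
          + φ β * max (-(f α)) 0 := by
      funext β; ring
    have hA : ∫ β, (φ β * (η * χ (α - β))
          + φ β * (max (-(f (α - β))) 0 - max (-(f α)) 0))
        = (∫ β, φ β * (η * χ (α - β)))
          + ∫ β, φ β * (max (-(f (α - β))) 0 - max (-(f α)) 0) :=
      integral_add hint1 hint2
    have hB : ∫ β, ((φ β * (η * χ (α - β))
          + φ β * (max (-(f (α - β))) 0 - max (-(f α)) 0)) + φ β * max (-(f α)) 0)
        = (∫ β, (φ β * (η * χ (α - β))
            + φ β * (max (-(f (α - β))) 0 - max (-(f α)) 0)))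
          + ∫ β, φ β * max (-(f α)) 0 :=
      integral_add (hint1.add hint2) hint3
    rw [heq, hB, hA]
  have hI1_nonneg : 0 ≤ ∫ β, φ β * (η * χ (α - β)) := integral_nonneg hg1_nonneg
  have hI1_le : (∫ β, φ β * (η * χ (α - β))) ≤ η := by
    calc (∫ β, φ β * (η * χ (α - β))) ≤ ∫ β, η * φ β :=
          integral_mono hint1 (hφmeas.const_mul η) hg1_bd
      _ = η := by rw [integral_const_mul, hφint, mul_one]
  have hI2 : |∫ β, φ β * (max (-(f (α - β))) 0 - max (-(f α)) 0)| ≤ η * s ^ δ := by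
    calc |∫ β, φ β * (max (-(f (α - β))) 0 - max (-(f α)) 0)|
        ≤ ∫ β, |φ β * (max (-(f (α - β))) 0 - max (-(f α)) 0)| := by
          simpa only [Real.norm_eq_abs] using
            norm_integral_le_integral_norm (μ := MeasureTheory.volume)
              (fun β => φ β * (max (-(f (α - β))) 0 - max (-(f α)) 0))
      _ ≤ ∫ β, φ β * (η * s ^ δ) :=
          integral_mono hint2.abs (hφmeas.mul_const _) hg2_bd
      _ = η * s ^ δ := by rw [integral_mul_const, hφint, one_mul]
  have hI3 : (∫ β, φ β * max (-(f α)) 0) = max (-(f α)) 0 := by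
    rw [integral_mul_const, hφint, one_mul]
  have hmax : max (-(f α)) 0 + f α = max (f α) 0 := by
    rcases le_or_gt (f α) 0 with h | h
    · rw [max_eq_left (by linarith), max_eq_right h]; ring
    · rw [max_eq_right (by linarith), max_eq_left h.le]; ring
  have hceq : 2 * c α + f α = (∫ β, φ β * (η * χ (α - β)))
      + (∫ β, φ β * (max (-(f (α - β))) 0 - max (-(f α)) 0)) + max (f α) 0 := by
    rw [hc α, hsplit, hI3, ← hmax]; ring
  have hfp0 : (0:ℝ) ≤ max (f α) 0 := le_max_right _ _
  have hfpη : max (f α) 0 ≤ η := max_le hfα.le hη.le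
  rw [hceq, abs_le]
  rw [abs_le] at hI2
  constructor
  · nlinarith
  · nlinarith
end

section
/- Let $v : \mathbb{R}^2 \to \mathbb{C}$ be defined for $x$ away from the union of the images of two $C^1$ closed curves $z_\pm$ of length at most $\ell$ by $v(x)^* = -\frac{1}{2\pi i}\sum_{b=\pm}\int_{\mathbb{T}}\frac{(\partial_\alpha z_b(\beta))_2}{x - z_b(\beta)}\,d\beta$. Then for every such $x$, $|v(x)| \leq \frac{\ell^2}{8\pi}\sum_{b=\pm}\frac{\|\partial_\alpha z_b\|_{C^0}^2}{\mathrm{dist}(x, \mathrm{Im}\,z_b)^2}$; in particular $v(x) = O(|x|^{-2})$ as $|x| \to \infty$. -/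
open Real MeasureTheory intervalIntegral Metric

lemma vqd_abs_integral (a : ℝ) (ha : 0 ≤ a) :
    ∫ β in (-a)..a, |β| = a ^ 2 := by
  have h1 : IntervalIntegrable (fun β : ℝ => |β|) volume (-a) 0 :=
    (continuous_abs).intervalIntegrable _ _
  have h2 : IntervalIntegrable (fun β : ℝ => |β|) volume 0 a :=
    (continuous_abs).intervalIntegrable _ _
  rw [← intervalIntegral.integral_add_adjacent_intervals h1 h2]
  have e1 : ∫ β in (-a)..(0:ℝ), |β| = ∫ β in (-a)..(0:ℝ), -β := by
    apply intervalIntegral.integral_congr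
    intro x hx
    rw [Set.uIcc_of_le (by linarith)] at hx
    exact abs_of_nonpos hx.2
  have e2 : ∫ β in (0:ℝ)..a, |β| = ∫ β in (0:ℝ)..a, β := by
    apply intervalIntegral.integral_congr
    intro x hx
    rw [Set.uIcc_of_le ha] at hx
    exact abs_of_nonneg hx.1
  rw [e1, e2, intervalIntegral.integral_neg, integral_id, integral_id]
  ring

lemma vqd_key (ℓ : ℝ) (hℓ : 0 < ℓ) (z : ℝ → ℂ) (hper : Function.Periodic z ℓ)
    (hz : ContDiff ℝ 1 z) (M : ℝ) (hM : ∀ α, ‖deriv z α‖ ≤ M)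
    (x : ℂ) (d : ℝ) (hd : 0 < d) (hdle : ∀ β, d ≤ ‖x - z β‖) :
    ‖∫ β in (-(ℓ / 2))..(ℓ / 2), ((deriv z β).im : ℂ) / (x - z β)‖
      ≤ ℓ ^ 2 * M ^ 2 / (4 * d ^ 2) := by
  have hdiff : Differentiable ℝ z := hz.differentiable one_ne_zero
  have hdc : Continuous (deriv z) := hz.continuous_deriv le_rfl
  have hne : ∀ β, x - z β ≠ 0 := by
    intro β h
    have := hdle β
    rw [h, norm_zero] at this
    linarith
  have hM0 : 0 ≤ M := le_trans (norm_nonneg _) (hM 0)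
  -- continuity of the integrand pieces
  have hcont1 : Continuous (fun β => ((deriv z β).im : ℂ) / (x - z β)) := by
    exact (Complex.continuous_ofReal.comp (Complex.continuous_im.comp hdc)).div
      (continuous_const.sub hz.continuous) hne
  have hint1 : IntervalIntegrable (fun β => ((deriv z β).im : ℂ) / (x - z β))
      volume (-(ℓ / 2)) (ℓ / 2) := hcont1.intervalIntegrable _ _
  have hcont2 : Continuous (fun β => ((deriv z β).im : ℂ) * (x - z 0)⁻¹) :=
    (Complex.continuous_ofReal.comp (Complex.continuous_im.comp hdc)).mul continuous_const
  -- cancellation : ∫ (deriv z).im = 0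
  have hcancel : (∫ β in (-(ℓ / 2))..(ℓ / 2), ((deriv z β).im : ℂ)) = 0 := by
    have hdint : IntervalIntegrable (deriv z) volume (-(ℓ / 2)) (ℓ / 2) :=
      hdc.intervalIntegrable _ _
    have h1 : (∫ β in (-(ℓ / 2))..(ℓ / 2), deriv z β) = z (ℓ / 2) - z (-(ℓ / 2)) :=
      intervalIntegral.integral_deriv_eq_sub (fun t _ => hdiff t) hdint
    have h2 : z (ℓ / 2) = z (-(ℓ / 2)) := by
      have := hper (-(ℓ / 2))
      rw [show -(ℓ / 2) + ℓ = ℓ / 2 by ring] at this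
      exact this
    have h3 : (∫ β in (-(ℓ / 2))..(ℓ / 2), ((deriv z β).im : ℝ)) = 0 := by
      have := Complex.imCLM.intervalIntegral_comp_comm hdint (a := -(ℓ / 2)) (b := ℓ / 2)
      simp only [Complex.imCLM_apply] at this
      rw [this, h1, h2, sub_self, Complex.zero_im]
    rw [intervalIntegral.integral_ofReal, h3, Complex.ofReal_zero]
  -- subtract a constant inside the integral
  have hsplit : (∫ β in (-(ℓ / 2))..(ℓ / 2), ((deriv z β).im : ℂ) / (x - z β))
      = ∫ β in (-(ℓ / 2))..(ℓ / 2),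
          ((deriv z β).im : ℂ) * ((x - z β)⁻¹ - (x - z 0)⁻¹) := by
    have e : (∫ β in (-(ℓ / 2))..(ℓ / 2),
          ((deriv z β).im : ℂ) * ((x - z β)⁻¹ - (x - z 0)⁻¹))
        = ∫ β in (-(ℓ / 2))..(ℓ / 2),
          (((deriv z β).im : ℂ) / (x - z β) - ((deriv z β).im : ℂ) * (x - z 0)⁻¹) := by
      apply intervalIntegral.integral_congr
      intro β _
      simp only [div_eq_mul_inv]
      ring
    rw [e, intervalIntegral.integral_sub hint1 (hcont2.intervalIntegrable _ _),
      intervalIntegral.integral_mul_const, hcancel, zero_mul, sub_zero]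
  rw [hsplit]
  -- pointwise bound
  have hbound : ∀ β ∈ Set.uIoc (-(ℓ / 2)) (ℓ / 2),
      ‖((deriv z β).im : ℂ) * ((x - z β)⁻¹ - (x - z 0)⁻¹)‖ ≤ M ^ 2 / d ^ 2 * |β| := by
    intro β _
    rw [norm_mul]
    have h1 : ‖((deriv z β).im : ℂ)‖ ≤ M := by
      rw [Complex.norm_real]
      exact le_trans (Complex.abs_im_le_norm _) (hM β)
    have hlip : ‖z β - z 0‖ ≤ M * |β| := by
      have := convex_univ.norm_image_sub_le_of_norm_deriv_le (s := Set.univ)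
        (fun t _ => hdiff t) (fun t _ => hM t)
        (Set.mem_univ 0) (Set.mem_univ β)
      simpa [Real.norm_eq_abs] using this
    have h2 : ‖(x - z β)⁻¹ - (x - z 0)⁻¹‖ ≤ M * |β| / d ^ 2 := by
      rw [inv_sub_inv (hne β) (hne 0)]
      have : (x - z 0) - (x - z β) = z β - z 0 := by ring
      rw [this, norm_div, norm_mul]
      have hb := hdle β; have h0 := hdle 0
      have hden : d ^ 2 ≤ ‖x - z β‖ * ‖x - z 0‖ := by nlinarith
      exact div_le_div₀ (by positivity) hlip (by positivity) hden
    calc ‖((deriv z β).im : ℂ)‖ * ‖(x - z β)⁻¹ - (x - z 0)⁻¹‖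
        ≤ M * (M * |β| / d ^ 2) := by
          apply mul_le_mul h1 h2 (norm_nonneg _) hM0
      _ = M ^ 2 / d ^ 2 * |β| := by ring
  have hgint : IntervalIntegrable (fun β => M ^ 2 / d ^ 2 * |β|) volume (-(ℓ / 2)) (ℓ / 2) :=
    (continuous_const.mul continuous_abs).intervalIntegrable _ _
  have hle := intervalIntegral.norm_integral_le_of_norm_le
    (by linarith : -(ℓ / 2) ≤ ℓ / 2)
    (MeasureTheory.ae_of_all _ fun t ht => hbound t (by rwa [Set.uIoc_of_le (by linarith)])) hgint
  refine hle.trans ?_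
  rw [intervalIntegral.integral_const_mul, vqd_abs_integral (ℓ / 2) (by linarith)]
  have heq : M ^ 2 / d ^ 2 * (ℓ / 2) ^ 2 = ℓ ^ 2 * M ^ 2 / (4 * d ^ 2) := by
    field_simp; ring
  rw [heq]

/-- quadratic decay of the coarse-grained velocity
`v(x)^* = -(2πi)⁻¹ Σ_{b=±} ∫_𝕋 (∂_α z_b(β))₂/(x - z_b(β)) dβ` generated by two `C¹`
closed curves of length at most `ℓ`:
`|v(x)| ≤ (ℓ²/8π) Σ_b ‖∂_α z_b‖_{C⁰}² / dist(x, Im z_b)²`. -/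
theorem velocity_quadratic_decay
    (ℓ : ℝ) (hℓ : 0 < ℓ)
    (zp zm : ℝ → ℂ)
    (hperp : Function.Periodic zp ℓ) (hperm : Function.Periodic zm ℓ)
    (hzp : ContDiff ℝ 1 zp) (hzm : ContDiff ℝ 1 zm)
    (Mp Mm : ℝ)
    (hMp : ∀ α, ‖deriv zp α‖ ≤ Mp) (hMm : ∀ α, ‖deriv zm α‖ ≤ Mm)
    (v : ℂ → ℂ)
    (hv : ∀ x : ℂ, x ∉ Set.range zp ∪ Set.range zm →
      (starRingEnd ℂ) (v x)
        = -(1 / (2 * π * Complex.I)) *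
            ((∫ β in (-(ℓ / 2))..(ℓ / 2), ((deriv zp β).im : ℂ) / (x - zp β))
              + ∫ β in (-(ℓ / 2))..(ℓ / 2), ((deriv zm β).im : ℂ) / (x - zm β))) :
    ∀ x : ℂ, x ∉ Set.range zp ∪ Set.range zm →
      ‖v x‖ ≤ ℓ ^ 2 / (8 * π) *
        (Mp ^ 2 / (infDist x (Set.range zp)) ^ 2
          + Mm ^ 2 / (infDist x (Set.range zm)) ^ 2) := by
  intro x hx
  have hxp : x ∉ Set.range zp := fun h => hx (Set.mem_union_left _ h)
  have hxm : x ∉ Set.range zm := fun h => hx (Set.mem_union_right _ h)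
  -- distances are positive
  have hclosed : ∀ (z : ℝ → ℂ), Function.Periodic z ℓ → ContDiff ℝ 1 z →
      IsClosed (Set.range z) := by
    intro z hper hz
    rw [← hper.image_Icc hℓ 0]
    exact (isCompact_Icc.image (hz.continuous)).isClosed
  have hdp : 0 < infDist x (Set.range zp) :=
    ((hclosed zp hperp hzp).notMem_iff_infDist_pos (Set.range_nonempty _)).1 hxp
  have hdm : 0 < infDist x (Set.range zm) :=
    ((hclosed zm hperm hzm).notMem_iff_infDist_pos (Set.range_nonempty _)).1 hxm
  have hdlep : ∀ β, infDist x (Set.range zp) ≤ ‖x - zp β‖ := fun β => by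
    simpa [Complex.dist_eq] using infDist_le_dist_of_mem (Set.mem_range_self (f := zp) β)
  have hdlem : ∀ β, infDist x (Set.range zm) ≤ ‖x - zm β‖ := fun β => by
    simpa [Complex.dist_eq] using infDist_le_dist_of_mem (Set.mem_range_self (f := zm) β)
  have keyp := vqd_key ℓ hℓ zp hperp hzp Mp hMp x _ hdp hdlep
  have keym := vqd_key ℓ hℓ zm hperm hzm Mm hMm x _ hdm hdlem
  have hvnorm : ‖v x‖ = ‖(starRingEnd ℂ) (v x)‖ := (RCLike.norm_conj _).symm
  rw [hvnorm, hv x hx]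
  rw [norm_mul, norm_neg, norm_div, norm_one]
  have hnorm2pi : ‖(2 * ↑π * Complex.I : ℂ)‖ = 2 * π := by
    simp [norm_mul, Complex.norm_real, abs_of_pos Real.pi_pos]
  rw [hnorm2pi]
  have hsum : ‖(∫ β in (-(ℓ / 2))..(ℓ / 2), ((deriv zp β).im : ℂ) / (x - zp β))
      + ∫ β in (-(ℓ / 2))..(ℓ / 2), ((deriv zm β).im : ℂ) / (x - zm β)‖
      ≤ ℓ ^ 2 * Mp ^ 2 / (4 * (infDist x (Set.range zp)) ^ 2)
        + ℓ ^ 2 * Mm ^ 2 / (4 * (infDist x (Set.range zm)) ^ 2) :=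
    (norm_add_le _ _).trans (add_le_add keyp keym)
  have hpi : 0 < π := Real.pi_pos
  calc 1 / (2 * π) * ‖(∫ β in (-(ℓ / 2))..(ℓ / 2), ((deriv zp β).im : ℂ) / (x - zp β))
      + ∫ β in (-(ℓ / 2))..(ℓ / 2), ((deriv zm β).im : ℂ) / (x - zm β)‖
      ≤ 1 / (2 * π) * (ℓ ^ 2 * Mp ^ 2 / (4 * (infDist x (Set.range zp)) ^ 2)
        + ℓ ^ 2 * Mm ^ 2 / (4 * (infDist x (Set.range zm)) ^ 2)) := by
        apply mul_le_mul_of_nonneg_left hsum (by positivity)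
    _ = ℓ ^ 2 / (8 * π) *
        (Mp ^ 2 / (infDist x (Set.range zp)) ^ 2
          + Mm ^ 2 / (infDist x (Set.range zm)) ^ 2) := by
        field_simp
        ring
end
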